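/- Let a, b > 0 and g > 0, and h(N) = ∑_{s∈S} f₁(s)^N f₂(s)^{m−N} g(s) with S finite, f₁, f₂ strictly positive, g non-negative and not identically zero. If f₁(s) = f₂(s) for all s with g(s) > 0, then h is constant on [0, m]; otherwise h is strictly convex on ℝ. -/

import Mathlib

open Real

theorem stmt_18 {S : Type*} [Fintype S] (f₁ f₂ g : S → ℝ)
    (hf₁ : ∀ s, 0 < f₁ s) (hf₂ : ∀ s, 0 < f₂ s) (hg : ∀ s, 0 ≤ g s)
    (hg' : ∃ s, g s ≠ 0)
    (m : ℝ) (hm : 0 < m)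
    (h : ℝ → ℝ)
    (hh : ∀ N, h N = ∑ s : S, f₁ s ^ N * f₂ s ^ (m - N) * g s) :
    ((∀ s, 0 < g s → f₁ s = f₂ s) →
        ∀ x ∈ Set.Icc (0 : ℝ) m, ∀ y ∈ Set.Icc (0 : ℝ) m, h x = h y) ∧
    (¬ (∀ s, 0 < g s → f₁ s = f₂ s) → StrictConvexOn ℝ Set.univ h) := by
  have key : ∀ N, h N = ∑ s : S,
      (f₂ s ^ m * g s) * Real.exp (N * (Real.log (f₁ s) - Real.log (f₂ s))) := by
    intro N
    rw [hh]
    refine Finset.sum_congr rfl fun s _ => ?_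
    rw [Real.rpow_def_of_pos (hf₁ s), Real.rpow_def_of_pos (hf₂ s),
        Real.rpow_def_of_pos (hf₂ s)]
    have : Real.exp (Real.log (f₁ s) * N) * Real.exp (Real.log (f₂ s) * (m - N)) =
        Real.exp (Real.log (f₂ s) * m) * Real.exp (N * (Real.log (f₁ s) - Real.log (f₂ s))) := by
      rw [← Real.exp_add, ← Real.exp_add]; ring_nf
    calc Real.exp (Real.log (f₁ s) * N) * Real.exp (Real.log (f₂ s) * (m - N)) * g s
        = Real.exp (Real.log (f₂ s) * m) *
            Real.exp (N * (Real.log (f₁ s) - Real.log (f₂ s))) * g s := by rw [this]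
      _ = _ := by ring
  constructor
  · intro hconst x _ y _
    have hc : ∀ N, h N = ∑ s : S, f₂ s ^ m * g s := by
      intro N
      rw [key]
      refine Finset.sum_congr rfl fun s _ => ?_
      rcases eq_or_lt_of_le (hg s) with h0 | h0
      · simp [← h0]
      · rw [hconst s h0]; simp
    rw [hc, hc]
  · intro hne
    push_neg at hne
    obtain ⟨s₀, hs₀g, hs₀ne⟩ := hne
    have hr : Real.log (f₁ s₀) - Real.log (f₂ s₀) ≠ 0 := by
      intro hcon
      apply hs₀ne
      have := sub_eq_zero.mp hcon
      rw [← Real.exp_log (hf₁ s₀), ← Real.exp_log (hf₂ s₀), this]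
    refine ⟨convex_univ, ?_⟩
    intro x _ y _ hxy a b ha hb hab
    rw [key, key, key]
    simp only [smul_eq_mul, Finset.mul_sum, ← Finset.sum_add_distrib]
    apply Finset.sum_lt_sum
    · intro s _
      set r := Real.log (f₁ s) - Real.log (f₂ s)
      have hexp : Real.exp (a * (x * r) + b * (y * r)) ≤
          a * Real.exp (x * r) + b * Real.exp (y * r) := by
        have := convexOn_exp.2 (Set.mem_univ (x * r)) (Set.mem_univ (y * r)) ha.le hb.le hab
        simpa using this
      have harg : (a * x + b * y) * r = a * (x * r) + b * (y * r) := by ring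
      have hc : 0 ≤ f₂ s ^ m * g s :=
        mul_nonneg (Real.rpow_nonneg (hf₂ s).le m) (hg s)
      rw [harg]
      nlinarith [mul_le_mul_of_nonneg_left hexp hc]
    · refine ⟨s₀, Finset.mem_univ s₀, ?_⟩
      set r := Real.log (f₁ s₀) - Real.log (f₂ s₀)
      have hargne : x * r ≠ y * r := fun hcon => hxy (mul_right_cancel₀ hr hcon)
      have hexp : Real.exp (a * (x * r) + b * (y * r)) <
          a * Real.exp (x * r) + b * Real.exp (y * r) := by
        have := strictConvexOn_exp.2 (Set.mem_univ (x * r)) (Set.mem_univ (y * r)) hargne ha hb hab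
        simpa using this
      have harg : (a * x + b * y) * r = a * (x * r) + b * (y * r) := by ring
      have hc : 0 < f₂ s₀ ^ m * g s₀ :=
        mul_pos (Real.rpow_pos_of_pos (hf₂ s₀) m) hs₀g
      rw [harg]
      nlinarith [mul_lt_mul_of_pos_left hexp hc]
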